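/- Let R be a ℂ-algebra which is a domain and whose center is ℂ·1. Let g be a ring automorphism of R of finite order which is inner, i.e., there exists a unit a ∈ R with g(x) = a x a⁻¹ for all x ∈ R. Then g is the identity automorphism (and a ∈ ℂ·1). In particular, any finite group acting faithfully by automorphisms on such R acts by outer automorphisms. -/

import Mathlib

open Polynomial in
lemma scalar_of_pow_scalar {R : Type*} [Ring R] [IsDomain R] [Algebra ℂ R]
    (b : R) (n : ℕ) (hn : 0 < n) (c : ℂ) (hb : b ^ n = algebraMap ℂ R c) :
    ∃ d : ℂ, b = algebraMap ℂ R d := by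
  set p : ℂ[X] := X ^ n - C c with hp
  have hmonic : p.Monic := monic_X_pow_sub_C c hn.ne'
  have hsplits : p.Splits := IsAlgClosed.splits p
  have hfac : p = (p.roots.map fun r => X - C r).prod :=
    (prod_multiset_X_sub_C_of_monic_of_roots_card_eq hmonic
      ((splits_iff_card_roots).mp hsplits)).symm
  have heval : aeval b p = 0 := by
    simp [hp, hb]
  set l : List ℂ[X] := (p.roots.map fun r => X - C r).toList with hl
  have hlp : l.prod = p := by
    rw [hl, Multiset.prod_toList, ← hfac]
  have h0 : (l.map (aeval b)).prod = 0 := by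
    rw [← map_list_prod (aeval b : ℂ[X] →ₐ[ℂ] R), hlp, heval]
  have := (List.prod_eq_zero_iff).mp h0
  rw [List.mem_map] at this
  obtain ⟨q, hq, hq0⟩ := this
  rw [hl, Multiset.mem_toList, Multiset.mem_map] at hq
  obtain ⟨r, _, rfl⟩ := hq
  refine ⟨r, ?_⟩
  have : b - algebraMap ℂ R r = 0 := by simpa using hq0
  exact sub_eq_zero.mp this

lemma inner_fin_order_aux
    {R : Type*} [Ring R] [IsDomain R] [Algebra ℂ R]
    (hcenter : Subalgebra.center ℂ R = ⊥)
    (g : R ≃+* R) (hfin : ∃ n : ℕ, 0 < n ∧ g ^ n = 1)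
    (a : Rˣ) (ha : ∀ x : R, g x = (a : R) * x * ((a⁻¹ : Rˣ) : R)) :
    g = RingEquiv.refl R ∧ ∃ c : ℂ, (a : R) = algebraMap ℂ R c := by
  obtain ⟨n, hn, hgn⟩ := hfin
  have hk : ∀ (k : ℕ) (x : R), (g ^ k) x = ((a ^ k : Rˣ) : R) * x * (((a ^ k)⁻¹ : Rˣ) : R) := by
    intro k
    induction k with
    | zero => intro x; simp
    | succ k ih =>
      intro x
      have h1 : (g ^ (k + 1)) x = g ((g ^ k) x) := by
        rw [pow_succ']; rfl
      rw [h1, ih, ha, pow_succ' a k, mul_inv_rev]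
      push_cast
      noncomm_ring
  have hcent : ((a ^ n : Rˣ) : R) ∈ Subalgebra.center ℂ R := by
    rw [Subalgebra.mem_center_iff]
    intro x
    have hx := hk n x
    rw [hgn] at hx
    replace hx : x = ((a ^ n : Rˣ) : R) * x * (((a ^ n)⁻¹ : Rˣ) : R) := hx
    calc x * ((a ^ n : Rˣ) : R)
        = (((a ^ n : Rˣ) : R) * x * (((a ^ n)⁻¹ : Rˣ) : R)) * ((a ^ n : Rˣ) : R) := by
          rw [← hx]
      _ = ((a ^ n : Rˣ) : R) * x := by
          rw [mul_assoc]
          rw [Units.inv_mul, mul_one]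
  rw [hcenter, Algebra.mem_bot] at hcent
  obtain ⟨c, hc⟩ := hcent
  have hpow : (a : R) ^ n = algebraMap ℂ R c := by
    rw [← Units.val_pow_eq_pow_val, ← hc]
  obtain ⟨d, hd⟩ := scalar_of_pow_scalar (a : R) n hn c hpow
  have hacent : ∀ x : R, (a : R) * x = x * (a : R) := by
    intro x
    rw [hd, Algebra.commutes]
  have hgid : g = RingEquiv.refl R := by
    ext x
    rw [ha x, hacent, mul_assoc]
    simp
  exact ⟨hgid, d, hd⟩

/-- let `R` be a `ℂ`-domain whose center is `ℂ·1`.  Any inner ring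
automorphism `g` of `R` of finite order is the identity, and the implementing
unit is a scalar.  In particular, every nontrivial element of a finite group
acting faithfully on `R` by ring automorphisms acts by an outer automorphism. -/
theorem inner_finite_order_automorphism_is_identity
    (R : Type*) [Ring R] [IsDomain R] [Algebra ℂ R]
    (hcenter : Subalgebra.center ℂ R = ⊥) :
    (∀ (g : R ≃+* R), (∃ n : ℕ, 0 < n ∧ g ^ n = 1) →
      ∀ a : Rˣ, (∀ x : R, g x = (a : R) * x * ((a⁻¹ : Rˣ) : R)) →
        g = RingEquiv.refl R ∧ ∃ c : ℂ, (a : R) = algebraMap ℂ R c) ∧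
    (∀ (Γ : Type) [Group Γ] [Finite Γ] (act : Γ →* (R ≃+* R)),
      Function.Injective act → ∀ g : Γ, g ≠ 1 →
        ¬ ∃ a : Rˣ, ∀ x : R, act g x = (a : R) * x * ((a⁻¹ : Rˣ) : R)) := by
  refine ⟨fun g hfin a ha => inner_fin_order_aux hcenter g hfin a ha, ?_⟩
  intro Γ _ _ act hinj g hg ⟨a, ha⟩
  have hfin : ∃ n : ℕ, 0 < n ∧ (act g) ^ n = 1 :=
    ⟨orderOf g, orderOf_pos g, by rw [← map_pow, pow_orderOf_eq_one, map_one]⟩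
  have hfirst := (inner_fin_order_aux hcenter (act g) hfin a ha).1
  exact hg (hinj (by rw [hfirst, map_one]; rfl))
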